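/- Let m > 1 and 1 ≤ N ≤ m, and assume (H1). If u is a radial solution on [0,R), then α = u(0) > b and u'(r) < 0 for every r ∈ (0,R). -/

import Mathlib

open Filter Set MeasureTheory intervalIntegral Topology

noncomputable section

/-- The half-open interval `[0, R)` inside `ℝ`, where `R : EReal` may be `∞`. -/
def domR (R : EReal) : Set ℝ := {r : ℝ | 0 ≤ r ∧ (r : EReal) < R}

/-- The filter describing `r → R⁻` inside `ℝ` (it equals `atTop` when `R = ∞`). -/
def limR (R : EReal) : Filter ℝ := Filter.comap Real.toEReal (nhdsWithin R (Set.Iio R))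

/-- Assumption (H1): `f` is continuous on `(0,∞)`, nonpositive on `(0,b]` and
positive on `(b,∞)`, with `b > 0`. -/
def H1cond (b : ℝ) (f : ℝ → ℝ) : Prop :=
  0 < b ∧ ContinuousOn f (Set.Ioi 0) ∧
    (∀ u : ℝ, 0 < u → u ≤ b → f u ≤ 0) ∧ (∀ u : ℝ, b < u → 0 < f u)

/-- `u` (with derivative `u'`) is a radial solution on `[0, R)` of
`(r^{N-1} |u'|^{m-2} u')' = - r^{N-1} f(u)`, positive, `C¹` up to the origin,
with `u'(0) = 0` and `u, u' → 0` as `r → R`. -/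
def IsRadialSolution (N : ℕ) (m : ℝ) (f : ℝ → ℝ) (R : EReal) (u u' : ℝ → ℝ) : Prop :=
  0 < R ∧
  (∀ r ∈ domR R, HasDerivWithinAt u (u' r) (domR R) r) ∧
  ContinuousOn u' (domR R) ∧
  (∀ r ∈ domR R, 0 < u r) ∧
  u' 0 = 0 ∧
  (∀ r : ℝ, 0 < r → (r : EReal) < R →
    HasDerivAt (fun s : ℝ => s ^ (N - 1) * |u' s| ^ (m - 2) * u' s)
      (-(r ^ (N - 1) * f (u r))) r) ∧
  Filter.Tendsto u (limR R) (nhds 0) ∧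
  Filter.Tendsto u' (limR R) (nhds 0)

/-- `rr` is the (strictly decreasing) inverse on `(0, α)` of a radial solution `u`,
with derivatives `rr'`, `rr''`, satisfying the transformed ODE
`(m-1) r'' = (N-1) r'²/r + f(u) |r'|^m r'`. -/
def IsInvSol (N : ℕ) (m α : ℝ) (f : ℝ → ℝ) (R : EReal) (u rr rr' rr'' : ℝ → ℝ) : Prop :=
  (∀ v ∈ Set.Ioo 0 α,
    0 < rr v ∧ (rr v : EReal) < R ∧ u (rr v) = v ∧
    HasDerivAt rr (rr' v) v ∧ rr' v < 0 ∧ HasDerivAt rr' (rr'' v) v ∧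
    (m - 1) * rr'' v = ((N : ℝ) - 1) * (rr' v) ^ 2 / rr v + f v * |rr' v| ^ m * rr' v) ∧
  (∀ x : ℝ, 0 < x → (x : EReal) < R → ∃ v ∈ Set.Ioo 0 α, rr v = x)

/-- The function `ω(u) = r(u)^{N-1} / (r'(u) |r'(u)|^{m-2})`. -/
def omegaF (N : ℕ) (m : ℝ) (rr rr' : ℝ → ℝ) (v : ℝ) : ℝ :=
  rr v ^ (N - 1) / (rr' v * |rr' v| ^ (m - 2))

/-- The function `P(u) = a u ω(u) + r(u)^N ((m-1)/m · 1/|r'(u)|^m + (a/N) u f(u))`. -/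
def PF (N : ℕ) (m a : ℝ) (f rr rr' : ℝ → ℝ) (v : ℝ) : ℝ :=
  a * v * omegaF N m rr rr' v +
    rr v ^ N * ((m - 1) / m * (1 / |rr' v| ^ m) + a / (N : ℝ) * v * f v)




private lemma phi_cont {q : ℝ} (hq : -1 < q) : Continuous fun x : ℝ => |x| ^ q * x := by
  rw [continuous_iff_continuousAt]
  intro a
  rcases eq_or_ne a 0 with rfl | ha
  · have hval : |(0 : ℝ)| ^ q * (0 : ℝ) = 0 := mul_zero _
    rw [ContinuousAt, hval]
    have hbound : ∀ x : ℝ, ‖|x| ^ q * x‖ ≤ |x| ^ (q + 1) := by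
      intro x
      rcases eq_or_ne x 0 with rfl | hx
      · simp [Real.zero_rpow (by linarith : q + 1 ≠ 0)]
      · rw [Real.norm_eq_abs, abs_mul, abs_of_nonneg (Real.rpow_nonneg (abs_nonneg x) q),
          Real.rpow_add_one (abs_ne_zero.2 hx)]
    have hlim : Tendsto (fun x : ℝ => |x| ^ (q + 1)) (𝓝 0) (𝓝 0) := by
      have hc : ContinuousAt (fun y : ℝ => y ^ (q + 1)) |(0 : ℝ)| :=
        Real.continuousAt_rpow_const _ _ (Or.inr (by linarith))
      have h2 : ContinuousAt (fun x : ℝ => |x| ^ (q + 1)) 0 := hc.comp continuous_abs.continuousAt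
      have h3 := h2.tendsto
      simpa [Real.zero_rpow (show q + 1 ≠ 0 by linarith)] using h3
    exact squeeze_zero_norm hbound hlim
  · exact ((Real.continuousAt_rpow_const _ q (Or.inl (abs_ne_zero.2 ha))).comp
      continuous_abs.continuousAt).mul continuousAt_id

private lemma limR_neBot {R : EReal} (hR : 0 < R) : (limR R).NeBot := by
  rw [limR]
  refine Filter.comap_neBot fun t ht => ?_
  rw [mem_nhdsWithin_iff_exists_mem_nhds_inter] at ht
  obtain ⟨V, hV, hVt⟩ := ht
  obtain ⟨l, hlR, hsub⟩ := exists_Ioc_subset_of_mem_nhds hV ⟨0, hR⟩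
  obtain ⟨y, hy1, hy2⟩ := EReal.exists_between_coe_real (max_lt hlR hR : max l 0 < R)
  exact ⟨y, hVt ⟨hsub ⟨(le_max_left l 0).trans_lt hy1, hy2.le⟩, hy2⟩⟩

private lemma limR_mem {R : EReal} : ∀ᶠ r : ℝ in limR R, (r : EReal) < R := by
  rw [limR]
  exact Filter.preimage_mem_comap self_mem_nhdsWithin

private lemma limR_gt {R : EReal} {a : ℝ} (ha : (a : EReal) < R) :
    ∀ᶠ r : ℝ in limR R, a < r := by
  rw [limR]
  have h1 : Ioi (a : EReal) ∈ nhdsWithin R (Set.Iio R) :=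
    mem_nhdsWithin_of_mem_nhds (isOpen_Ioi.mem_nhds ha)
  refine Filter.mem_of_superset (Filter.preimage_mem_comap h1) fun r hr => ?_
  exact EReal.coe_lt_coe_iff.1 hr

private lemma F_hasDeriv {b t : ℝ} {f : ℝ → ℝ} (hb : 0 < b) (ht : 0 < t)
    (hf : ContinuousOn f (Set.Ioi 0)) :
    HasDerivAt (fun t => ∫ s in b..t, f s) (f t) t := by
  apply intervalIntegral.integral_hasDerivAt_right
  · apply ContinuousOn.intervalIntegrable
    exact hf.mono fun z hz => lt_of_lt_of_le (lt_min hb ht) hz.1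
  · exact ContinuousOn.stronglyMeasurableAtFilter isOpen_Ioi hf t ht
  · exact hf.continuousAt (Ioi_mem_nhds ht)

private lemma F_anti {b s t : ℝ} {f : ℝ → ℝ} (hb : 0 < b) (hs : 0 < s) (hst : s ≤ t)
    (htb : t ≤ b) (hf : ContinuousOn f (Set.Ioi 0))
    (hneg : ∀ y : ℝ, 0 < y → y ≤ b → f y ≤ 0) :
    (∫ x in b..t, f x) ≤ ∫ x in b..s, f x := by
  have hint : ∀ {a c : ℝ}, 0 < a → 0 < c → IntervalIntegrable f MeasureTheory.volume a c := by
    intro a c ha hc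
    exact ContinuousOn.intervalIntegrable
      (hf.mono fun z hz => lt_of_lt_of_le (lt_min ha hc) hz.1)
  have hadd : (∫ x in b..s, f x) + ∫ x in s..t, f x = ∫ x in b..t, f x :=
    intervalIntegral.integral_add_adjacent_intervals (hint hb hs) (hint hs (hs.trans_le hst))
  have h2 : (∫ x in s..t, f x) ≤ 0 := by
    have h3 : 0 ≤ ∫ x in s..t, -f x := by
      apply intervalIntegral.integral_nonneg hst
      intro z hz
      have := hneg z (lt_of_lt_of_le hs hz.1) (hz.2.trans htb)
      linarith
    rw [intervalIntegral.integral_neg] at h3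
    linarith
  linarith


/-- for `m > 1`, `1 ≤ N ≤ m`, under (H1), any radial solution satisfies
`u(0) > b` and `u'(r) < 0` for all `r ∈ (0, R)`. -/
theorem stmt2 (N : ℕ) (m b : ℝ) (f : ℝ → ℝ) (hm : 1 < m)
    (hN1 : 1 ≤ N) (hNm : (N : ℝ) ≤ m) (hf : H1cond b f)
    (R : EReal) (u u' : ℝ → ℝ) (hu : IsRadialSolution N m f R u u') :
    b < u 0 ∧ ∀ r : ℝ, 0 < r → (r : EReal) < R → u' r < 0 := by
  obtain ⟨hb0, hfc, hfneg, hfpos⟩ := hf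
  obtain ⟨hR, hud, hu'c, hupos, hu'0, hODE, hulim, hu'lim⟩ := hu
  haveI : (limR R).NeBot := limR_neBot hR
  have hm1 : (0:ℝ) < m - 1 := by linarith
  have hm0 : (0:ℝ) < m := by linarith
  set p : ℝ := m / (m - 1) with hp_def
  have hp1 : 1 < p := by
    rw [hp_def, lt_div_iff₀ hm1]; linarith
  have hp0 : p ≠ 0 := by positivity
  set φ : ℝ → ℝ := fun y => |y| ^ (m - 2) * y with hφ_def
  set F : ℝ → ℝ := fun t => ∫ s in b..t, f s with hF_def
  set w : ℝ → ℝ := fun s => s ^ (N - 1) * |u' s| ^ (m - 2) * u' s with hw_def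
  set E : ℝ → ℝ := fun s => (m - 1) / m * |φ (u' s)| ^ p + F (u s) with hE_def
  have hφ0 : φ 0 = 0 := by simp [hφ_def]
  have hφ_ne : ∀ y : ℝ, y ≠ 0 → φ y ≠ 0 := fun y hy =>
    mul_ne_zero (Real.rpow_pos_of_pos (abs_pos.2 hy) _).ne' hy
  have hφcont : Continuous φ := phi_cont (by linarith)
  have hψφ : ∀ y : ℝ, |φ y| ^ (p - 2) * φ y = y := by
    intro y
    rcases eq_or_ne y 0 with rfl | hy
    · rw [hφ0]; simp
    · have habs : |(|y| ^ (m - 2) * y)| = |y| ^ (m - 1) := by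
        rw [abs_mul, abs_of_nonneg (Real.rpow_nonneg (abs_nonneg y) _),
          ← Real.rpow_add_one (abs_ne_zero.2 hy)]
        congr 1
        ring
      simp only [hφ_def]
      rw [habs, ← Real.rpow_mul (abs_nonneg y)]
      have hexp : (m - 1) * (p - 2) = 2 - m := by rw [hp_def]; field_simp; ring
      rw [hexp, ← mul_assoc, ← Real.rpow_add (abs_pos.2 hy)]
      have h9 : 2 - m + (m - 2) = 0 := by ring
      rw [h9, Real.rpow_zero, one_mul]
  have hyφ : ∀ y : ℝ, y * φ y = |y| ^ m := by
    intro y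
    rcases eq_or_ne y 0 with rfl | hy
    · simp [hφ0, Real.zero_rpow hm0.ne']
    · rw [hφ_def]
      simp only
      have h1 : y * (|y| ^ (m - 2) * y) = |y| ^ (m - 2) * (|y| * |y|) := by
        rw [abs_mul_abs_self]; ring
      rw [h1, ← mul_assoc, ← Real.rpow_add_one (abs_ne_zero.2 hy),
        ← Real.rpow_add_one (abs_ne_zero.2 hy)]
      congr 1
      ring
  have h0D : (0:ℝ) ∈ domR R := ⟨le_refl 0, by simpa using hR⟩
  have hD_nhds : ∀ x : ℝ, 0 < x → (x : EReal) < R → domR R ∈ 𝓝 x := by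
    intro x hx hxR
    obtain ⟨y, hy1, hy2⟩ := EReal.exists_between_coe_real hxR
    have hxy : x < y := by exact_mod_cast hy1
    refine Filter.mem_of_superset (isOpen_Ioo.mem_nhds ⟨hx, hxy⟩ : Ioo 0 y ∈ 𝓝 x) ?_
    intro z hz
    exact ⟨hz.1.le, lt_trans (by exact_mod_cast hz.2) hy2⟩
  have hIcc_sub : ∀ c ∈ domR R, ∀ a : ℝ, 0 ≤ a → Icc a c ⊆ domR R := by
    intro c hc a ha z hz
    exact ⟨le_trans ha hz.1, lt_of_le_of_lt (EReal.coe_le_coe_iff.2 hz.2) hc.2⟩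
  have hcontu : ContinuousOn u (domR R) := fun r hr => (hud r hr).continuousWithinAt
  have huD : ∀ x : ℝ, 0 < x → (x : EReal) < R → HasDerivAt u (u' x) x := fun x hx hxR =>
    (hud x ⟨hx.le, hxR⟩).hasDerivAt (hD_nhds x hx hxR)
  have hFd : ∀ t : ℝ, 0 < t → HasDerivAt F (f t) t := fun t ht => F_hasDeriv hb0 ht hfc
  have hFanti : ∀ s t : ℝ, 0 < s → s ≤ t → t ≤ b → F t ≤ F s := fun s t hs hst htb =>
    F_anti hb0 hs hst htb hfc hfneg
  have hw_eq : ∀ s : ℝ, w s = s ^ (N - 1) * φ (u' s) := by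
    intro s; rw [hw_def, hφ_def]; simp only; ring
  have hwA : ∀ s ∈ domR R, w s / s ^ (N - 1) = φ (u' s) := by
    intro s hs
    rcases eq_or_lt_of_le hs.1 with h0 | h0
    · by_cases hN : N = 1
      · subst hN; rw [hw_eq]; simp
      · have hN2 : N - 1 ≠ 0 := by omega
        rw [← h0, hw_eq, hu'0, hφ0]
        simp [zero_pow hN2]
    · rw [hw_eq, mul_div_cancel_left₀ _ (pow_ne_zero _ h0.ne')]
  have hAd : ∀ x : ℝ, 0 < x → (x : EReal) < R →
      HasDerivAt (fun s => w s / s ^ (N - 1))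
        (-(f (u x)) - (((N:ℝ) - 1) / x) * φ (u' x)) x := by
    intro x hx hxR
    have hdiv := (hODE x hx hxR).div (hasDerivAt_pow (N - 1) x) (pow_ne_zero _ hx.ne')
    convert hdiv using 1
    case e'_4 => rfl
    case e'_5 => rfl
    case e'_8 => rfl
    rw [hw_eq]
    rcases Nat.lt_or_ge N 2 with hN | hN
    · have hN1' : N = 1 := by omega
      subst hN1'
      norm_num
    · obtain ⟨K, rfl⟩ : ∃ K, N = K + 2 := ⟨N - 2, by omega⟩
      have he1 : K + 2 - 1 = K + 1 := by omega
      have he2 : K + 1 - 1 = K := by omega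
      rw [he1, he2]
      push_cast
      field_simp
      ring
  have hEd : ∀ x : ℝ, 0 < x → (x : EReal) < R →
      HasDerivAt E (-((((N:ℝ) - 1) / x) * |u' x| ^ m)) x := by
    intro x hx hxR
    have hxD : x ∈ domR R := ⟨hx.le, hxR⟩
    have h1 := (hasDerivAt_abs_rpow (w x / x ^ (N - 1)) hp1).comp x (hAd x hx hxR)
    rw [hwA x hxD] at h1
    have heq : (fun s : ℝ => |φ (u' s)| ^ p) =ᶠ[𝓝 x]
        ((fun t : ℝ => |t| ^ p) ∘ fun s : ℝ => w s / s ^ (N - 1)) := by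
      filter_upwards [hD_nhds x hx hxR] with s hs
      simp [Function.comp, hwA s hs]
    have h2 : HasDerivAt (fun s : ℝ => |φ (u' s)| ^ p)
        (p * |φ (u' x)| ^ (p - 2) * φ (u' x) *
          (-(f (u x)) - (((N:ℝ) - 1) / x) * φ (u' x))) x :=
      HasDerivAt.congr_of_eventuallyEq h1 heq
    have hval : p * |φ (u' x)| ^ (p - 2) * φ (u' x) = p * u' x := by
      rw [mul_assoc, hψφ]
    rw [hval] at h2
    have h3 := h2.const_mul ((m - 1) / m)
    have h4 := (hFd (u x) (hupos x hxD)).comp x (huD x hx hxR)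
    have h5 := h3.add h4
    convert h5 using 1
    case e'_4 => rfl
    case e'_5 => rfl
    case e'_8 => rfl
    have hm1p : (m - 1) / m * p = 1 := by rw [hp_def]; field_simp
    rw [← hyφ (u' x)]
    rw [hp_def]
    field_simp
    ring
  have hE_cont : ContinuousOn E (domR R) := by
    apply ContinuousOn.add
    · have hc : Continuous fun y : ℝ => (m - 1) / m * |φ y| ^ p :=
        continuous_const.mul ((Real.continuous_rpow_const (by positivity : (0:ℝ) ≤ p)).comp
          (continuous_abs.comp hφcont))
      exact hc.comp_continuousOn hu'c
    · intro r hr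
      exact (hFd (u r) (hupos r hr)).continuousAt.comp_continuousWithinAt (hcontu r hr)
  have hE_anti : ∀ a c : ℝ, 0 ≤ a → c ∈ domR R → AntitoneOn E (Icc a c) := by
    intro a c ha hc
    have hsub := hIcc_sub c hc a ha
    apply antitoneOn_of_deriv_nonpos (convex_Icc a c) (hE_cont.mono hsub)
    · intro x hx
      rw [interior_Icc] at hx
      have hx0 : 0 < x := lt_of_le_of_lt ha hx.1
      have hxR : (x : EReal) < R := lt_trans (EReal.coe_lt_coe_iff.2 hx.2) hc.2
      exact (hEd x hx0 hxR).differentiableAt.differentiableWithinAt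
    · intro x hx
      rw [interior_Icc] at hx
      have hx0 : 0 < x := lt_of_le_of_lt ha hx.1
      have hxR : (x : EReal) < R := lt_trans (EReal.coe_lt_coe_iff.2 hx.2) hc.2
      rw [(hEd x hx0 hxR).deriv]
      have h1 : 0 ≤ (((N:ℝ) - 1) / x) * |u' x| ^ m := by
        apply mul_nonneg
        · apply div_nonneg _ hx0.le
          have : (1:ℝ) ≤ (N:ℝ) := by exact_mod_cast hN1
          linarith
        · exact Real.rpow_nonneg (abs_nonneg _) m
      linarith
  have hkey : ∀ r0 : ℝ, r0 ∈ domR R → u' r0 = 0 → u r0 ≤ b → False := by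
    intro r0 hr0D hu'r0 hub
    have hc0 : 0 < u r0 := hupos r0 hr0D
    have hstar : ∀ r, r ∈ domR R → r0 ≤ r → u r ≤ u r0 → u' r = 0 := by
      intro r hrD hr0r hur
      have hE_le : E r ≤ E r0 :=
        (hE_anti r0 r hr0D.1 hrD) ⟨le_refl r0, hr0r⟩ ⟨hr0r, le_refl r⟩ hr0r
      have hEr0 : E r0 = F (u r0) := by
        rw [hE_def]
        simp only
        rw [hu'r0, hφ0]
        simp [Real.zero_rpow hp0]
      have hF_le : F (u r0) ≤ F (u r) := hFanti (u r) (u r0) (hupos r hrD) hur hub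
      have hE_expand : E r = (m - 1) / m * |φ (u' r)| ^ p + F (u r) := by rw [hE_def]
      have h1 : (m - 1) / m * |φ (u' r)| ^ p ≤ 0 := by
        rw [hEr0] at hE_le
        rw [hE_expand] at hE_le
        linarith
      have h2 : (0:ℝ) ≤ |φ (u' r)| ^ p := Real.rpow_nonneg (abs_nonneg _) p
      have h3 : |φ (u' r)| ^ p = 0 := by
        have hmm : 0 < (m - 1) / m := by positivity
        nlinarith
      have h4 : φ (u' r) = 0 := by
        have h5 := (Real.rpow_eq_zero_iff_of_nonneg (abs_nonneg (φ (u' r)))).1 h3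
        exact abs_eq_zero.1 h5.1
      by_contra hne
      exact hφ_ne _ hne h4
    have hge : ∀ r, r ∈ domR R → r0 ≤ r → u r0 ≤ u r := by
      intro r hrD hr0r
      by_contra hlt
      push_neg at hlt
      set d : ℝ := (u r + u r0) / 2 with hd_def
      have hd1 : u r < d := by rw [hd_def]; linarith
      have hd2 : d < u r0 := by rw [hd_def]; linarith
      have hIcc1 : Icc r0 r ⊆ domR R := hIcc_sub r hrD r0 hr0D.1
      have hcont1 : ContinuousOn u (Icc r0 r) := hcontu.mono hIcc1
      set S1 : Set ℝ := {x | x ∈ Icc r0 r ∧ u x ≤ d} with hS1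
      have hS1c : IsClosed S1 := by
        have h6 := hcont1.preimage_isClosed_of_isClosed isClosed_Icc (isClosed_Iic (a := d))
        convert h6 using 1
        rfl
      have hS1comp : IsCompact S1 := isCompact_Icc.of_isClosed_subset hS1c fun x hx => hx.1
      have hS1ne : S1.Nonempty := ⟨r, ⟨⟨hr0r, le_refl r⟩, hd1.le⟩⟩
      set T := sInf S1 with hT
      have hTmem : T ∈ S1 := hS1comp.sInf_mem hS1ne
      have hsub2' : Icc r0 T ⊆ domR R := hIcc_sub T (hIcc1 hTmem.1) r0 hr0D.1
      set S2 : Set ℝ := {x | x ∈ Icc r0 T ∧ u r0 ≤ u x} with hS2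
      have hS2c : IsClosed S2 := by
        have h6 := (hcontu.mono hsub2').preimage_isClosed_of_isClosed isClosed_Icc
          (isClosed_Ici (a := u r0))
        convert h6 using 1
        rfl
      have hS2comp : IsCompact S2 := isCompact_Icc.of_isClosed_subset hS2c fun x hx => hx.1
      have hS2ne : S2.Nonempty := ⟨r0, ⟨⟨le_refl r0, hTmem.1.1⟩, le_refl (u r0)⟩⟩
      set T' := sSup S2 with hT'
      have hT'mem : T' ∈ S2 := hS2comp.sSup_mem hS2ne
      have hT'ub : ∀ x ∈ S2, x ≤ T' := fun x hx => le_csSup hS2comp.bddAbove hx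
      have hT'T : T' < T := by
        refine lt_of_le_of_ne hT'mem.1.2 fun h => ?_
        have h7 := hT'mem.2
        rw [h] at h7
        have h8 := hTmem.2
        linarith
      have habove : ∀ x, T' < x → x ≤ T → u x < u r0 := by
        intro x h1 h2
        by_contra hge2
        push_neg at hge2
        have hxS2 : x ∈ S2 := ⟨⟨le_trans hT'mem.1.1 h1.le, h2⟩, hge2⟩
        exact absurd (hT'ub x hxS2) (not_le.2 h1)
      have hTD : T ∈ domR R := hIcc1 hTmem.1
      have hsub3' : Icc T' T ⊆ domR R :=
        hIcc_sub T hTD T' (le_trans hr0D.1 hT'mem.1.1)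
      obtain ⟨ξ, hξmem, hξ⟩ := exists_hasDerivAt_eq_slope u u' hT'T (hcontu.mono hsub3')
        (fun x hxmem => by
          have hx0 : 0 < x := lt_of_le_of_lt (le_trans hr0D.1 hT'mem.1.1) hxmem.1
          have hxR : (x : EReal) < R :=
            lt_trans (EReal.coe_lt_coe_iff.2 hxmem.2) hTD.2
          exact huD x hx0 hxR)
      have hξD : ξ ∈ domR R := hsub3' ⟨hξmem.1.le, hξmem.2.le⟩
      have huξ : u ξ < u r0 := habove ξ hξmem.1 hξmem.2.le
      have h0' : u' ξ = 0 := hstar ξ hξD (le_trans hT'mem.1.1 hξmem.1.le) huξ.le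
      have hslope : u' ξ < 0 := by
        rw [hξ]
        apply div_neg_of_neg_of_pos
        · have h9 := hT'mem.2
          have h10 := hTmem.2
          linarith
        · linarith
      linarith
    have hev : ∀ᶠ r in limR R, u r0 ≤ u r := by
      filter_upwards [limR_gt hr0D.2, limR_mem (R := R)] with r h1 h2
      exact hge r ⟨le_trans hr0D.1 h1.le, h2⟩ h1.le
    have hfin : u r0 ≤ 0 := ge_of_tendsto hulim hev
    linarith
  have hclaimA : b < u 0 := by
    by_contra hA
    push_neg at hA
    exact hkey 0 h0D hu'0 hA
  refine ⟨hclaimA, ?_⟩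
  intro r hr hrR
  by_contra hcon
  have hcon' : 0 ≤ u' r := not_lt.1 hcon
  have hrD : r ∈ domR R := ⟨hr.le, hrR⟩
  obtain ⟨δ, hδ0, hδR, hδprop⟩ : ∃ δ : ℝ, 0 < δ ∧ (δ : EReal) < R ∧
      ∀ x, 0 ≤ x → x ≤ δ → b < u x := by
    have hcw : ContinuousWithinAt u (domR R) 0 := hcontu 0 h0D
    have hev2 : {s : ℝ | b < u s} ∈ 𝓝[domR R] (0:ℝ) := hcw (Ioi_mem_nhds hclaimA)
    rw [Metric.mem_nhdsWithin_iff] at hev2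
    obtain ⟨ε, hε, hball⟩ := hev2
    obtain ⟨y, hy1, hy2⟩ := EReal.exists_between_coe_real hR
    have hy0 : 0 < y := by exact_mod_cast hy1
    refine ⟨min (ε / 2) y, by positivity, ?_, ?_⟩
    · exact lt_of_le_of_lt (EReal.coe_le_coe_iff.2 (min_le_right _ _)) hy2
    · intro x hx0 hxδ
      apply hball
      constructor
      · rw [Metric.mem_ball, Real.dist_eq, sub_zero, abs_of_nonneg hx0]
        calc x ≤ min (ε / 2) y := hxδ
        _ ≤ ε / 2 := min_le_left _ _
        _ < ε := by linarith
      · refine ⟨hx0, ?_⟩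
        calc (x : EReal) ≤ ((min (ε / 2) y : ℝ) : EReal) := EReal.coe_le_coe_iff.2 hxδ
        _ ≤ (y : EReal) := EReal.coe_le_coe_iff.2 (min_le_right _ _)
        _ < R := hy2
  have hδD : δ ∈ domR R := ⟨hδ0.le, hδR⟩
  have hsubδ : Icc 0 δ ⊆ domR R := hIcc_sub δ hδD 0 (le_refl 0)
  have hwcont : ContinuousOn w (Icc 0 δ) := by
    have h1 : ContinuousOn (fun s : ℝ => s ^ (N - 1) * φ (u' s)) (Icc 0 δ) :=
      (continuous_pow (N - 1)).continuousOn.mul (hφcont.comp_continuousOn (hu'c.mono hsubδ))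
    exact h1.congr fun s _ => hw_eq s
  have hwanti : StrictAntiOn w (Icc 0 δ) := by
    apply strictAntiOn_of_deriv_neg (convex_Icc 0 δ) hwcont
    intro x hx
    rw [interior_Icc] at hx
    have hx0 := hx.1
    have hxR : (x : EReal) < R := lt_trans (EReal.coe_lt_coe_iff.2 hx.2) hδD.2
    rw [(hODE x hx0 hxR).deriv]
    have hfu : 0 < f (u x) := hfpos _ (hδprop x hx0.le hx.2.le)
    have h2 : 0 < x ^ (N - 1) * f (u x) := mul_pos (pow_pos hx0 _) hfu
    linarith
  have hw0 : w 0 = 0 := by rw [hw_eq, hu'0, hφ0, mul_zero]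
  have hu'neg : ∀ x : ℝ, 0 < x → x ≤ δ → u' x < 0 := by
    intro x h1 h2
    have hwx : w x < 0 := by
      have h3 := hwanti (left_mem_Icc.2 hδ0.le) ⟨h1.le, h2⟩ h1
      rwa [hw0] at h3
    by_contra hge2
    push_neg at hge2
    have h4 : 0 ≤ w x := by
      rw [hw_eq]
      exact mul_nonneg (pow_nonneg h1.le _)
        (mul_nonneg (Real.rpow_nonneg (abs_nonneg _) _) hge2)
    linarith
  have hrδ : δ < r := by
    by_contra hle
    push_neg at hle
    exact absurd (hu'neg r hr hle) (not_lt.2 hcon')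
  set S3 : Set ℝ := {x | x ∈ Icc δ r ∧ 0 ≤ u' x} with hS3
  have hsub3 : Icc δ r ⊆ domR R := hIcc_sub r hrD δ hδ0.le
  have hS3c : IsClosed S3 := by
    have h6 := (hu'c.mono hsub3).preimage_isClosed_of_isClosed isClosed_Icc
      (isClosed_Ici (a := (0:ℝ)))
    convert h6 using 1
    rfl
  have hS3comp : IsCompact S3 := isCompact_Icc.of_isClosed_subset hS3c fun x hx => hx.1
  have hS3ne : S3.Nonempty := ⟨r, ⟨⟨hrδ.le, le_refl r⟩, hcon'⟩⟩
  set ρ := sInf S3 with hρ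
  have hρmem : ρ ∈ S3 := hS3comp.sInf_mem hS3ne
  have hρlb : ∀ x ∈ S3, ρ ≤ x := fun x hx => csInf_le hS3comp.bddBelow hx
  have hρδ : δ < ρ := by
    refine lt_of_le_of_ne hρmem.1.1 fun h => ?_
    have h7 := hρmem.2
    rw [← h] at h7
    exact absurd (hu'neg δ hδ0 (le_refl δ)) (not_lt.2 h7)
  have hρ0 : 0 < ρ := lt_trans hδ0 hρδ
  have hρR : (ρ : EReal) < R := lt_of_le_of_lt (EReal.coe_le_coe_iff.2 hρmem.1.2) hrD.2
  have hρD : ρ ∈ domR R := ⟨hρ0.le, hρR⟩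
  have hneg_before : ∀ x : ℝ, 0 < x → x < ρ → u' x < 0 := by
    intro x h1 h2
    rcases le_or_gt x δ with hle | hlt
    · exact hu'neg x h1 hle
    · by_contra hge2
      push_neg at hge2
      have h3 : x ∈ S3 := ⟨⟨hlt.le, le_trans h2.le hρmem.1.2⟩, hge2⟩
      linarith [hρlb x h3]
  have hu'ρ : u' ρ = 0 := by
    refine le_antisymm ?_ hρmem.2
    have hcρ : ContinuousAt u' ρ := (hu'c ρ hρD).continuousAt (hD_nhds ρ hρ0 hρR)
    have htend : Tendsto u' (𝓝[<] ρ) (𝓝 (u' ρ)) := hcρ.tendsto.mono_left nhdsWithin_le_nhds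
    refine le_of_tendsto htend ?_
    filter_upwards [mem_nhdsWithin_of_mem_nhds (Ioi_mem_nhds hρ0), self_mem_nhdsWithin]
      with x hx1 hx2
    exact (hneg_before x hx1 hx2).le
  rcases le_or_gt (u ρ) b with hcase | hcase
  · exact hkey ρ hρD hu'ρ hcase
  · have hd := hODE ρ hρ0 hρR
    have hwρ : w ρ = 0 := by rw [hw_eq, hu'ρ, hφ0, mul_zero]
    have hdneg : -(ρ ^ (N - 1) * f (u ρ)) < 0 := by
      have h1 := hfpos _ hcase
      have h2 := pow_pos hρ0 (N - 1)
      nlinarith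
    rw [hasDerivAt_iff_tendsto_slope] at hd
    have hev3 : ∀ᶠ s in 𝓝[≠] ρ, slope w ρ s < 0 := hd (Iio_mem_nhds hdneg)
    have hev4 : ∀ᶠ s in 𝓝[<] ρ, slope w ρ s < 0 :=
      hev3.filter_mono (nhdsWithin_mono ρ fun x hx => ne_of_lt hx)
    have hev5 : ∀ᶠ s in 𝓝[<] ρ, 0 < s := mem_nhdsWithin_of_mem_nhds (Ioi_mem_nhds hρ0)
    obtain ⟨s, hs1, hs2, hs3⟩ := (hev4.and (hev5.and self_mem_nhdsWithin)).exists
    have hws : w s < 0 := by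
      have h1 := hneg_before s hs2 hs3
      rw [hw_eq]
      exact mul_neg_of_pos_of_neg (pow_pos hs2 _)
        (mul_neg_of_pos_of_neg (Real.rpow_pos_of_pos (abs_pos.2 h1.ne) _) h1)
    rw [slope_def_field, hwρ, sub_zero] at hs1
    rcases div_neg_iff.1 hs1 with ⟨h1, h2⟩ | ⟨h1, h2⟩
    · linarith
    · have : s - ρ < 0 := sub_neg.2 hs3
      linarith


end
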